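/- Let X = {0,1}^{d−1} × {0} ⊂ ℝ^d, and let x' = (a,…,a,b) ∈ ℝ^d where 0 < a < 1. Then for any two distinct points y, z ∈ X with y ≠ 0 and z ≠ 0, the inner product satisfies ⟨y − x', z − x'⟩ > b² − (d−1)·a. In particular, if b² ≥ (d−1)·a then the angle at x' in the triangle y x' z is acute. -/
import Mathlib


open scoped InnerProductSpace

/-- The vertex set `{0,1}^(d-1) × {0}` of the `(d-1)`-dimensional unit hypercube
embedded in `ℝ^d` with last coordinate `0`. -/
def hypercube (d : ℕ) : Set (EuclideanSpace ℝ (Fin d)) :=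
  {v | ∀ i : Fin d, if (i : ℕ) = d - 1 then v i = 0 else v i = 0 ∨ v i = 1}

lemma term_gt {a u v : ℝ} (ha : 0 < a) (ha1 : a < 1)
    (hu : u = 0 ∨ u = 1) (hv : v = 0 ∨ v = 1) : -a < (u - a) * (v - a) := by
  rcases hu with h | h <;> rcases hv with h' | h' <;> subst h <;> subst h' <;> nlinarith

/-- Let `x' = (a,…,a,b) ∈ ℝ^d` with `0 < a < 1`.  For any two distinct nonzero vertices
`y, z` of the hypercube `X = {0,1}^(d-1) × {0}` one has
`⟪y - x', z - x'⟫ > b² - (d-1)·a`; in particular, if `b² ≥ (d-1)·a` then the angle at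
`x'` in the triangle `y x' z` is acute. -/
theorem inner_at_perturbed_vertex_lower_bound (d : ℕ) (hd : 2 ≤ d) (a b : ℝ)
    (ha : 0 < a) (ha1 : a < 1)
    (x' : EuclideanSpace ℝ (Fin d))
    (hx' : ∀ i : Fin d, x' i = if (i : ℕ) = d - 1 then b else a) :
    ∀ y ∈ hypercube d, ∀ z ∈ hypercube d, y ≠ 0 → z ≠ 0 → y ≠ z →
      b ^ 2 - ((d : ℝ) - 1) * a < ⟪y - x', z - x'⟫_ℝ ∧
      (((d : ℝ) - 1) * a ≤ b ^ 2 →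
        EuclideanGeometry.angle y x' z < Real.pi / 2) := by
  intro y hy z hz _ _ _
  have key : b ^ 2 - ((d : ℝ) - 1) * a < ⟪y - x', z - x'⟫_ℝ := by
    have hinner : ⟪y - x', z - x'⟫_ℝ = ∑ i : Fin d, (y i - x' i) * (z i - x' i) := by
      rw [PiLp.inner_apply]
      simp [PiLp.sub_apply, RCLike.inner_apply, mul_comm]
    rw [hinner]
    set c : Fin d := ⟨d - 1, by omega⟩ with hc_def
    have hc : ∀ i : Fin d, ((i : ℕ) = d - 1) ↔ i = c := by
      intro i
      constructor
      · intro h; exact Fin.ext h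
      · intro h; rw [h]
    have hsum : (∑ i : Fin d, (if (i : ℕ) = d - 1 then b ^ 2 else -a))
        = b ^ 2 - ((d : ℝ) - 1) * a := by
      have heq : ∀ i : Fin d, (if (i : ℕ) = d - 1 then b ^ 2 else -a)
          = (if i = c then b ^ 2 + a else 0) + (-a) := by
        intro i; simp only [hc i]; split <;> ring
      rw [Finset.sum_congr rfl (fun i _ => heq i), Finset.sum_add_distrib,
        Finset.sum_const, Finset.card_univ, Fintype.card_fin,
        Finset.sum_ite_eq' Finset.univ c (fun _ => b ^ 2 + a)]
      simp only [Finset.mem_univ, if_true, nsmul_eq_mul]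
      ring
    rw [← hsum]
    apply Finset.sum_lt_sum
    · intro i _
      by_cases hi : (i : ℕ) = d - 1
      · have hyi := hy i
        have hzi := hz i
        rw [if_pos hi] at hyi hzi
        rw [if_pos hi, hyi, hzi, hx' i, if_pos hi]
        ring_nf
        exact le_refl _
      · have hyi := hy i
        have hzi := hz i
        rw [if_neg hi] at hyi hzi
        rw [if_neg hi, hx' i, if_neg hi]
        exact (term_gt ha ha1 hyi hzi).le
    · refine ⟨⟨0, by omega⟩, Finset.mem_univ _, ?_⟩
      have hi : ((⟨0, by omega⟩ : Fin d) : ℕ) ≠ d - 1 := by simp; omega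
      have hyi := hy ⟨0, by omega⟩
      have hzi := hz ⟨0, by omega⟩
      rw [if_neg hi] at hyi hzi
      rw [if_neg hi, hx' _, if_neg hi]
      exact term_gt ha ha1 hyi hzi
  refine ⟨key, ?_⟩
  intro hba
  have hpos : 0 < ⟪y - x', z - x'⟫_ℝ := by linarith
  have hny : y - x' ≠ 0 := by
    intro h; rw [h, inner_zero_left] at hpos; exact lt_irrefl _ hpos
  have hnz : z - x' ≠ 0 := by
    intro h; rw [h, inner_zero_right] at hpos; exact lt_irrefl _ hpos
  rw [EuclideanGeometry.angle, vsub_eq_sub, vsub_eq_sub, InnerProductGeometry.angle,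
    Real.arccos_lt_pi_div_two]
  exact div_pos hpos (mul_pos (norm_pos_iff.mpr hny) (norm_pos_iff.mpr hnz))
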